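/- For every n ≥ 1, every ω ∈ ℝ and every x ∈ ℂ, the Hankel-determinant form of the three-term recurrence holds: p̃_{n+1}(x; ω) h_{n−1}(ω)² = ( h_n(ω) h_{n−1}(ω) x + i ( h_n'(ω) h_{n−1}(ω) − h_{n−1}'(ω) h_n(ω) ) ) p̃_n(x; ω) − h_n(ω)² p̃_{n−1}(x; ω), where primes denote derivatives with respect to ω. -/

import Mathlib

open MeasureTheory

/-- Moments of the oscillatory weight `e^{iωx}` on `[-1,1]`. -/
noncomputable def mu (ω : ℝ) (n : ℕ) : ℂ :=
  ∫ x : ℝ in (-1 : ℝ)..1, (x : ℂ) ^ n * Complex.exp (Complex.I * ω * x)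

/-- The `(n+1) × (n+1)` Hankel determinant of the moments. -/
noncomputable def hankel (n : ℕ) (ω : ℝ) : ℂ :=
  Matrix.det (Matrix.of fun j k : Fin (n + 1) => mu ω ((j : ℕ) + (k : ℕ)))

/-- The renormalized orthogonal polynomial `p̃_n(x; ω) = h_{n-1}(ω) p_n(x; ω)`,
as a Hankel-type determinant with last column `(1, x, …, x^n)`. -/
noncomputable def ptil (n : ℕ) (ω : ℝ) (x : ℂ) : ℂ :=
  Matrix.det (Matrix.of fun j k : Fin (n + 1) =>
    if (k : ℕ) = n then x ^ (j : ℕ) else mu ω ((j : ℕ) + (k : ℕ)))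

open Matrix BigOperators Finset Polynomial intervalIntegral
set_option maxRecDepth 10000

section AlgebraicCore
variable {R : Type*} [CommRing R] {S : Type*} [CommRing S]

def Amat (μ : ℕ → R) (m : ℕ) : Matrix (Fin (m+1)) (Fin (m+1)) R :=
  Matrix.of fun j k => μ ((j : ℕ) + (k : ℕ))

def hk (μ : ℕ → R) (m : ℕ) : R := (Amat μ m).det

def Fm (μ : ℕ → R) (m : ℕ) (v : Fin (m+1) → R) : R :=
  ((Amat μ m).updateCol (Fin.last m) v).det

def gk (μ : ℕ → R) (m : ℕ) : R := Fm μ m (fun j => μ ((j : ℕ) + m + 1))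

def pt (μ : ℕ → R) (m : ℕ) (x : R) : R := Fm μ m (fun j => x ^ (j : ℕ))

def cofM (μ : ℕ → R) (m : ℕ) (j : ℕ) : R :=
  Fm μ m (fun i => if (i : ℕ) = j then 1 else 0)

lemma Fm_eq_cramer (μ : ℕ → R) (m : ℕ) (v : Fin (m+1) → R) :
    Fm μ m v = Matrix.cramer (Amat μ m) v (Fin.last m) := (Matrix.cramer_apply _ _ _).symm

lemma Fm_eq_sum (μ : ℕ → R) (m : ℕ) (v : Fin (m+1) → R) :
    Fm μ m v = ∑ j : Fin (m+1), v j * cofM μ m (j : ℕ) := by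
  have hv : v = ∑ j : Fin (m+1), v j • (Pi.single j (1 : R) : Fin (m+1) → R) := by
    funext i
    simp [Pi.single_apply]
  have hsingle : ∀ j : Fin (m+1),
      (fun i : Fin (m+1) => if (i : ℕ) = (j : ℕ) then (1:R) else 0) = Pi.single j 1 := by
    intro j; funext i; simp [Pi.single_apply, Fin.val_eq_val]
  rw [Fm_eq_cramer]
  conv_lhs => rw [hv]
  rw [map_sum]
  simp only [Finset.sum_apply]
  refine Finset.sum_congr rfl fun j _ => ?_
  rw [LinearMap.map_smul]
  simp only [Pi.smul_apply, smul_eq_mul]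
  rw [cofM, Fm_eq_cramer, hsingle j]

lemma Fm_mu_lt (μ : ℕ → R) (m i : ℕ) (h : i < m) :
    Fm μ m (fun j => μ ((j : ℕ) + i)) = 0 := by
  refine Matrix.det_zero_of_column_eq (i := (⟨i, by omega⟩ : Fin (m+1))) (j := Fin.last m) ?_ ?_
  · simp [Fin.ext_iff]; omega
  · intro k
    rw [Matrix.updateCol_apply, Matrix.updateCol_apply]
    simp [Fin.ext_iff, Fin.val_last, (by omega : i ≠ m), Amat]

lemma Fm_mu_eq (μ : ℕ → R) (m : ℕ) :
    Fm μ m (fun j => μ ((j : ℕ) + m)) = hk μ m := by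
  rw [Fm, hk]
  congr 1
  have : (fun j : Fin (m+1) => μ ((j : ℕ) + m)) = fun j => (Amat μ m) j (Fin.last m) := by
    funext j; simp [Amat]
  rw [this, Matrix.updateCol_eq_self]

lemma cofM_eq_zero (μ : ℕ → R) (m j : ℕ) (h : m < j) : cofM μ m j = 0 := by
  rw [cofM]
  refine Matrix.det_eq_zero_of_column_eq_zero (Fin.last m) fun i => ?_
  rw [Matrix.updateCol_self]
  simp only [ite_eq_right_iff]
  intro hij; exfalso; omega

lemma cofM_self (μ : ℕ → R) (m : ℕ) : cofM μ (m+1) (m+1) = hk μ m := by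
  rw [cofM, Fm, Matrix.det_succ_column _ (Fin.last (m+1))]
  rw [Finset.sum_eq_single (Fin.last (m+1))]
  · rw [Matrix.updateCol_self]
    simp only [Fin.val_last, eq_self_iff_true, if_true, mul_one]
    have hsign : ((-1 : R)) ^ (m+1+(m+1)) = 1 := Even.neg_one_pow ⟨m+1, rfl⟩
    rw [hsign, one_mul, hk]
    refine congrArg Matrix.det ?_
    ext j k
    rw [Matrix.submatrix_apply, Fin.succAbove_last, Matrix.updateCol_apply,
      if_neg (Fin.castSucc_lt_last k).ne]
    simp [Amat]
  · intro i _ hi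
    rw [Matrix.updateCol_self]
    have : ((i : ℕ) = m + 1) = False := by
      simp only [eq_iff_iff, iff_false]
      intro h; exact hi (Fin.ext (by simp [h]))
    simp [this]
  · simp

lemma cofM_pred (μ : ℕ → R) (m : ℕ) : cofM μ (m+1) m = - gk μ m := by
  rw [cofM, Fm, Matrix.det_succ_column _ (Fin.last (m+1))]
  rw [Finset.sum_eq_single (⟨m, by omega⟩ : Fin (m+2))]
  · rw [Matrix.updateCol_self]
    simp only [Fin.val_last, eq_self_iff_true, if_true, mul_one]
    have hsign : ((-1 : R)) ^ (m+(m+1)) = -1 := Odd.neg_one_pow ⟨m, by ring⟩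
    rw [hsign, gk, Fm, neg_one_mul, neg_inj]
    rw [← Matrix.det_transpose ((Amat μ m).updateCol (Fin.last m) fun j => μ ((j:ℕ) + m + 1))]
    refine congrArg Matrix.det ?_
    ext j k
    rw [Matrix.submatrix_apply, Fin.succAbove_last, Matrix.updateCol_apply,
      if_neg (Fin.castSucc_lt_last k).ne, Matrix.transpose_apply, Matrix.updateCol_apply]
    rcases Nat.lt_or_ge (j : ℕ) m with hj | hj
    · rw [Fin.succAbove_of_castSucc_lt _ _ (by simp [Fin.lt_def, hj]),
        if_neg (by simp [Fin.ext_iff, Fin.val_last]; omega)]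
      simp only [Amat, Matrix.of_apply, Fin.coe_castSucc]
      congr 1; omega
    · have hjm : (j : ℕ) = m := by omega
      rw [Fin.succAbove_of_le_castSucc _ _ (by simp [Fin.le_def, hjm]),
        if_pos (Fin.ext (by simp [Fin.val_last, hjm]))]
      simp only [Amat, Matrix.of_apply, Fin.val_succ, Fin.coe_castSucc]
      congr 1; omega
  · intro i _ hi
    rw [Matrix.updateCol_self]
    have : ((i : ℕ) = m) = False := by
      simp only [eq_iff_iff, iff_false]
      intro h; exact hi (Fin.ext (by simp [h]))
    simp [this]
  · simp
lemma Fm_range (μ : ℕ → R) (m M : ℕ) (h : m < M) (c : ℕ → R) :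
    ∑ j ∈ Finset.range M, c j * cofM μ m j = Fm μ m (fun i => c (i : ℕ)) := by
  rw [Fm_eq_sum μ m (fun i => c (i : ℕ)),
    Fin.sum_univ_eq_sum_range (fun j => c j * cofM μ m j)]
  symm
  refine Finset.sum_subset (Finset.range_subset_range.2 (by omega)) ?_
  intro j hj hj2
  rw [cofM_eq_zero μ m j (by simp at hj2 ⊢; omega), mul_zero]

theorem key_generic (μ : ℕ → ℂ) (n : ℕ) (h0 : hk μ n ≠ 0) (x : ℂ) :
    pt μ (n+2) x * (hk μ n)^2 =
      (hk μ (n+1) * hk μ n * x - (gk μ (n+1) * hk μ n - gk μ n * hk μ (n+1))) * pt μ (n+1) x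
        - (hk μ (n+1))^2 * pt μ n x := by
  set c : ℂ := gk μ (n+1) * hk μ n - gk μ n * hk μ (n+1) with hc
  set rr : ℕ → ℂ := fun j => hk μ n^2 * cofM μ (n+2) j
    - hk μ (n+1) * hk μ n * (if j = 0 then 0 else cofM μ (n+1) (j-1))
    + c * cofM μ (n+1) j + hk μ (n+1)^2 * cofM μ n j with hrr
  -- vanishing of top coefficients
  have hrr1 : rr (n+1) = 0 := by
    have h1 : cofM μ (n+2) (n+1) = -gk μ (n+1) := cofM_pred μ (n+1)
    have h2 : cofM μ (n+1) ((n+1) - 1) = -gk μ n := by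
      rw [Nat.add_sub_cancel]; exact cofM_pred μ n
    have h3 : cofM μ (n+1) (n+1) = hk μ n := cofM_self μ n
    have h4 : cofM μ n (n+1) = 0 := cofM_eq_zero μ n (n+1) (by omega)
    simp only [hrr, if_neg (Nat.succ_ne_zero n), h1, h2, h3, h4, hc]
    ring
  have hrr2 : rr (n+2) = 0 := by
    have h1 : cofM μ (n+2) (n+2) = hk μ (n+1) := cofM_self μ (n+1)
    have h2 : cofM μ (n+1) ((n+2) - 1) = hk μ n := by
      rw [show (n+2) - 1 = n + 1 from rfl]; exact cofM_self μ n
    have h3 : cofM μ (n+1) (n+2) = 0 := cofM_eq_zero μ (n+1) (n+2) (by omega)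
    have h4 : cofM μ n (n+2) = 0 := cofM_eq_zero μ n (n+2) (by omega)
    simp only [hrr, if_neg (Nat.succ_ne_zero (n+1)), h1, h2, h3, h4]
    ring
  -- moment sums vanish
  have hmom : ∀ i : Fin (n+1), ∑ j ∈ Finset.range (n+3), μ ((i:ℕ) + j) * rr j = 0 := by
    intro i
    have S2 : ∑ j ∈ Finset.range (n+3), μ ((i:ℕ) + j) * cofM μ (n+2) j = 0 := by
      rw [Fm_range μ (n+2) (n+3) (by omega)]
      have : (fun k : Fin (n+3) => μ ((i:ℕ) + (k:ℕ))) = (fun k => μ ((k:ℕ) + (i:ℕ)) : Fin _ → ℂ) := by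
        funext k; rw [Nat.add_comm]
      rw [this, Fm_mu_lt μ (n+2) i (by omega)]
    have S1 : ∑ j ∈ Finset.range (n+3), μ ((i:ℕ) + j) * cofM μ (n+1) j = 0 := by
      rw [Fm_range μ (n+1) (n+3) (by omega)]
      have : (fun k : Fin (n+2) => μ ((i:ℕ) + (k:ℕ))) = (fun k => μ ((k:ℕ) + (i:ℕ)) : Fin _ → ℂ) := by
        funext k; rw [Nat.add_comm]
      rw [this, Fm_mu_lt μ (n+1) i (by omega)]
    have S0 : ∑ j ∈ Finset.range (n+3), μ ((i:ℕ) + j) * cofM μ n j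
        = (if (i:ℕ) = n then hk μ n else 0) := by
      rw [Fm_range μ n (n+3) (by omega)]
      have : (fun k : Fin (n+1) => μ ((i:ℕ) + (k:ℕ))) = (fun k => μ ((k:ℕ) + (i:ℕ)) : Fin _ → ℂ) := by
        funext k; rw [Nat.add_comm]
      rw [this]
      by_cases hi : (i:ℕ) = n
      · rw [if_pos hi, hi, Fm_mu_eq]
      · rw [if_neg hi, Fm_mu_lt μ n i (by omega)]
    have Ssh : ∑ j ∈ Finset.range (n+3), μ ((i:ℕ) + j) *
        (if j = 0 then 0 else cofM μ (n+1) (j-1))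
        = (if (i:ℕ) = n then hk μ (n+1) else 0) := by
      rw [Finset.sum_range_succ' _ (n+2)]
      simp only [Nat.succ_ne_zero, Nat.add_sub_cancel, ite_false, ite_true, mul_zero, add_zero]
      have : ∀ j, μ ((i:ℕ) + (j+1)) = μ (((i:ℕ)+1) + j) := by intro j; congr 1; omega
      calc ∑ j ∈ Finset.range (n+2), μ ((i:ℕ) + (j+1)) * cofM μ (n+1) j
          = ∑ j ∈ Finset.range (n+2), μ (((i:ℕ)+1) + j) * cofM μ (n+1) j := by
            exact Finset.sum_congr rfl fun j _ => by rw [this j]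
        _ = Fm μ (n+1) (fun k => μ (((i:ℕ)+1) + (k:ℕ))) := Fm_range μ (n+1) (n+2) (by omega) _
        _ = (if (i:ℕ) = n then hk μ (n+1) else 0) := by
            have e : (fun k : Fin (n+2) => μ (((i:ℕ)+1) + (k:ℕ)))
                = (fun k => μ ((k:ℕ) + ((i:ℕ)+1)) : Fin _ → ℂ) := by funext k; rw [Nat.add_comm]
            rw [e]
            by_cases hi : (i:ℕ) = n
            · rw [if_pos hi, hi, Fm_mu_eq]
            · rw [if_neg hi]
              exact Fm_mu_lt μ (n+1) ((i:ℕ)+1) (by have := i.isLt; omega)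
    calc ∑ j ∈ Finset.range (n+3), μ ((i:ℕ) + j) * rr j
        = hk μ n^2 * (∑ j ∈ Finset.range (n+3), μ ((i:ℕ) + j) * cofM μ (n+2) j)
          - hk μ (n+1) * hk μ n * (∑ j ∈ Finset.range (n+3), μ ((i:ℕ) + j) *
              (if j = 0 then 0 else cofM μ (n+1) (j-1)))
          + c * (∑ j ∈ Finset.range (n+3), μ ((i:ℕ) + j) * cofM μ (n+1) j)
          + hk μ (n+1)^2 * (∑ j ∈ Finset.range (n+3), μ ((i:ℕ) + j) * cofM μ n j) := by
          simp only [Finset.mul_sum]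
          rw [← Finset.sum_sub_distrib, ← Finset.sum_add_distrib, ← Finset.sum_add_distrib]
          exact Finset.sum_congr rfl fun j _ => by simp only [hrr]; ring
      _ = 0 := by
          rw [S2, S1, S0, Ssh]
          by_cases hi : (i:ℕ) = n <;> simp [hi] <;> ring
  -- kernel argument
  have hker : ∀ j : ℕ, j ≤ n → rr j = 0 := by
    have hv : (Amat μ n).mulVec (fun j : Fin (n+1) => rr (j:ℕ)) = 0 := by
      funext i
      have := hmom i
      rw [Finset.sum_range_succ, Finset.sum_range_succ] at this
      rw [hrr1, hrr2, mul_zero, mul_zero, add_zero, add_zero] at this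
      rw [Matrix.mulVec, Pi.zero_apply]
      exact (Fin.sum_univ_eq_sum_range (fun j => μ ((i:ℕ) + j) * rr j) (n+1)).trans this
    have := Matrix.eq_zero_of_mulVec_eq_zero (by exact h0) hv
    intro j hj
    have := congrFun this ⟨j, by omega⟩
    simpa using this
  -- assemble
  have e2 : ∑ j ∈ Finset.range (n+3), x ^ j * cofM μ (n+2) j = pt μ (n+2) x :=
    Fm_range μ (n+2) (n+3) (by omega) _
  have e1 : ∑ j ∈ Finset.range (n+3), x ^ j * cofM μ (n+1) j = pt μ (n+1) x :=
    Fm_range μ (n+1) (n+3) (by omega) _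
  have e0 : ∑ j ∈ Finset.range (n+3), x ^ j * cofM μ n j = pt μ n x :=
    Fm_range μ n (n+3) (by omega) _
  have e1' : ∑ j ∈ Finset.range (n+2), x ^ j * cofM μ (n+1) j = pt μ (n+1) x :=
    Fm_range μ (n+1) (n+2) (by omega) _
  have esh : ∑ j ∈ Finset.range (n+3), x ^ j * (if j = 0 then 0 else cofM μ (n+1) (j-1))
      = x * pt μ (n+1) x := by
    rw [Finset.sum_range_succ' _ (n+2)]
    simp only [Nat.succ_ne_zero, Nat.add_sub_cancel, ite_false, ite_true, mul_zero, add_zero]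
    rw [← e1', Finset.mul_sum]
    exact Finset.sum_congr rfl fun j _ => by ring
  have hzero : ∑ j ∈ Finset.range (n+3), rr j * x ^ j = 0 := by
    rw [Finset.sum_range_succ, Finset.sum_range_succ, hrr1, hrr2, zero_mul, zero_mul,
      add_zero, add_zero]
    refine Finset.sum_eq_zero fun j hj => ?_
    rw [hker j (by simp at hj; omega), zero_mul]
  have hsplit : ∑ j ∈ Finset.range (n+3), rr j * x ^ j
      = hk μ n^2 * (∑ j ∈ Finset.range (n+3), x ^ j * cofM μ (n+2) j)
        - hk μ (n+1) * hk μ n * (∑ j ∈ Finset.range (n+3), x ^ j *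
            (if j = 0 then 0 else cofM μ (n+1) (j-1)))
        + c * (∑ j ∈ Finset.range (n+3), x ^ j * cofM μ (n+1) j)
        + hk μ (n+1)^2 * (∑ j ∈ Finset.range (n+3), x ^ j * cofM μ n j) := by
    simp only [Finset.mul_sum]
    rw [← Finset.sum_sub_distrib, ← Finset.sum_add_distrib, ← Finset.sum_add_distrib]
    exact Finset.sum_congr rfl fun j _ => by simp only [hrr]; ring
  rw [e2, e1, e0, esh, hzero] at hsplit
  linear_combination -hsplit

lemma Amat_map (f : R →+* S) (μ : ℕ → R) (m : ℕ) :
    (Amat μ m).map f = Amat (fun k => f (μ k)) m := by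
  ext j k; simp [Amat, Matrix.map_apply]

lemma hk_map (f : R →+* S) (μ : ℕ → R) (m : ℕ) :
    f (hk μ m) = hk (fun k => f (μ k)) m := by
  rw [hk, RingHom.map_det, RingHom.mapMatrix_apply, Amat_map, hk]

lemma gk_map (f : R →+* S) (μ : ℕ → R) (m : ℕ) :
    f (gk μ m) = gk (fun k => f (μ k)) m := by
  rw [gk, Fm, RingHom.map_det, RingHom.mapMatrix_apply, Matrix.map_updateCol, Amat_map, gk, Fm]
  congr 1

lemma pt_map (f : R →+* S) (μ : ℕ → R) (m : ℕ) (x : R) :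
    f (pt μ m x) = pt (fun k => f (μ k)) m (f x) := by
  rw [pt, Fm, RingHom.map_det, RingHom.mapMatrix_apply, Matrix.map_updateCol, Amat_map, pt, Fm]
  have hv : (⇑f ∘ fun j : Fin (m+1) => x ^ (j:ℕ)) = fun j : Fin (m+1) => (f x) ^ (j:ℕ) := by
    funext j; exact map_pow f x (j:ℕ)
  rw [hv]

-- coefficient of degree s in det of linear-entry matrix
lemma coeff_det_top (s : ℕ) (A B : Matrix (Fin s) (Fin s) ℂ) :
    ((Matrix.of fun j k => (C (A j k) + X * C (B j k) : ℂ[X])).det).coeff s = B.det := by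
  rw [Matrix.det_apply, Matrix.det_apply, Polynomial.finset_sum_coeff]
  refine Finset.sum_congr rfl fun σ _ => ?_
  rw [Polynomial.coeff_smul]
  congr 1
  have h1 : ∀ i : Fin s, natDegree ((Matrix.of fun j k =>
      (C (A j k) + X * C (B j k) : ℂ[X])) (σ i) i) ≤ 1 := by
    intro i
    simp only [Matrix.of_apply]
    refine (Polynomial.natDegree_add_le _ _).trans ?_
    simp only [Polynomial.natDegree_C, max_le_iff]
    constructor
    · omega
    · exact (Polynomial.natDegree_mul_le).trans (by simp)
  have := Polynomial.coeff_prod_of_natDegree_le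
    (s := Finset.univ) (fun i : Fin s => (Matrix.of fun j k =>
      (C (A j k) + X * C (B j k) : ℂ[X])) (σ i) i) 1 (fun p _ => h1 p)
  simp only [Finset.card_univ, Fintype.card_fin, mul_one] at this
  rw [this]
  refine Finset.prod_congr rfl fun i _ => ?_
  simp [Polynomial.coeff_C]

-- witness determinant nonzero
lemma wdet_ne_zero (n : ℕ) :
    (Matrix.of fun j k : Fin (n+1) =>
      (if (j:ℕ) + (k:ℕ) = n ∨ (j:ℕ) + (k:ℕ) = n + 1 then (1:ℂ) else 0)).det ≠ 0 := by
  set W : Matrix (Fin (n+1)) (Fin (n+1)) ℂ := Matrix.of fun j k =>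
      (if (j:ℕ) + (k:ℕ) = n ∨ (j:ℕ) + (k:ℕ) = n + 1 then (1:ℂ) else 0) with hW
  have hB : (W.submatrix id ⇑(Fin.revPerm : Equiv.Perm (Fin (n+1)))).det = 1 := by
    rw [Matrix.det_of_lowerTriangular _ ?ht]
    case ht =>
      intro i j hij
      have hij' : (i:ℕ) < (j:ℕ) := hij
      have hj : (j:ℕ) ≤ n := Nat.lt_succ_iff.mp j.isLt
      have hrev : ((Fin.revPerm j : Fin (n+1)) : ℕ) = n - (j:ℕ) := by
        simp [Fin.revPerm, Fin.val_rev]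
      rw [Matrix.submatrix_apply, hW, id]
      rw [Matrix.of_apply, if_neg (by rw [hrev]; omega)]
    refine Finset.prod_eq_one fun i _ => ?_
    have hi : (i:ℕ) ≤ n := Nat.lt_succ_iff.mp i.isLt
    have hrev : ((Fin.revPerm i : Fin (n+1)) : ℕ) = n - (i:ℕ) := by
      simp [Fin.revPerm, Fin.val_rev]
    rw [Matrix.submatrix_apply, hW, id]
    rw [Matrix.of_apply, if_pos (by rw [hrev]; omega)]
  have hP := Matrix.det_permute' (Fin.revPerm : Equiv.Perm (Fin (n+1))) W
  rw [hB] at hP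
  intro h0
  rw [h0, mul_zero] at hP
  exact one_ne_zero hP


end AlgebraicCore

theorem key_all (n : ℕ) (μ : ℕ → ℂ) (x : ℂ) :
    pt μ (n+2) x * (hk μ n)^2 =
      (hk μ (n+1) * hk μ n * x - (gk μ (n+1) * hk μ n - gk μ n * hk μ (n+1))) * pt μ (n+1) x
        - (hk μ (n+1))^2 * pt μ n x := by
  classical
  set w : ℕ → ℂ := fun k => if k = n ∨ k = n+1 then 1 else 0 with hw
  set ν : ℕ → ℂ[X] := fun k => C (μ k) + X * C (w k) with hν
  set P : ℂ[X] := pt ν (n+2) (C x) * (hk ν n)^2 -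
    ((hk ν (n+1) * hk ν n * C x - (gk ν (n+1) * hk ν n - gk ν n * hk ν (n+1))) * pt ν (n+1) (C x)
      - (hk ν (n+1))^2 * pt ν n (C x)) with hP
  have heval : ∀ t : ℂ, (fun k => Polynomial.eval t (ν k)) = fun k => μ k + t * w k := by
    intro t; funext k; rw [hν]; simp; ring
  have h1 : ∀ (t : ℂ) (m : ℕ), Polynomial.eval t (hk ν m) = hk (fun k => μ k + t * w k) m := by
    intro t m
    have := hk_map (Polynomial.evalRingHom t) ν m
    simp only [Polynomial.coe_evalRingHom] at this
    rw [this]; rw [heval t]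
  have h2 : ∀ (t : ℂ) (m : ℕ), Polynomial.eval t (gk ν m) = gk (fun k => μ k + t * w k) m := by
    intro t m
    have := gk_map (Polynomial.evalRingHom t) ν m
    simp only [Polynomial.coe_evalRingHom] at this
    rw [this]; rw [heval t]
  have h3 : ∀ (t : ℂ) (m : ℕ), Polynomial.eval t (pt ν m (C x))
      = pt (fun k => μ k + t * w k) m x := by
    intro t m
    have := pt_map (Polynomial.evalRingHom t) ν m (C x)
    simp only [Polynomial.coe_evalRingHom, Polynomial.eval_C] at this
    rw [this]; rw [heval t]
  have hPt : ∀ t : ℂ, Polynomial.eval t P =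
      pt (fun k => μ k + t * w k) (n+2) x * (hk (fun k => μ k + t * w k) n)^2 -
        ((hk (fun k => μ k + t * w k) (n+1) * hk (fun k => μ k + t * w k) n * x -
          (gk (fun k => μ k + t * w k) (n+1) * hk (fun k => μ k + t * w k) n -
            gk (fun k => μ k + t * w k) n * hk (fun k => μ k + t * w k) (n+1))) *
              pt (fun k => μ k + t * w k) (n+1) x -
          (hk (fun k => μ k + t * w k) (n+1))^2 * pt (fun k => μ k + t * w k) n x) := by
    intro t
    rw [hP]
    simp only [Polynomial.eval_sub, Polynomial.eval_mul, Polynomial.eval_pow,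
      Polynomial.eval_C]
    rw [h1 t, h1 t, h2 t, h2 t, h3 t, h3 t, h3 t]
  -- hk ν n is a nonzero polynomial
  have hq : hk ν n ≠ 0 := by
    intro h
    have hmat : Amat ν n = Matrix.of (fun j k : Fin (n+1) =>
        (C (Amat μ n j k) + X * C ((Matrix.of fun j k : Fin (n+1) =>
          (if (j:ℕ) + (k:ℕ) = n ∨ (j:ℕ) + (k:ℕ) = n + 1 then (1:ℂ) else 0)) j k) : ℂ[X])) := by
      ext j k; simp [Amat, hν, hw]
    have hcoeff := coeff_det_top (n+1) (Amat μ n) (Matrix.of fun j k : Fin (n+1) =>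
      (if (j:ℕ) + (k:ℕ) = n ∨ (j:ℕ) + (k:ℕ) = n + 1 then (1:ℂ) else 0))
    rw [← hmat] at hcoeff
    rw [show (Amat ν n).det = hk ν n from rfl, h] at hcoeff
    simp only [Polynomial.coeff_zero] at hcoeff
    exact wdet_ne_zero n hcoeff.symm
  have hfin : {t : ℂ | (hk ν n).IsRoot t}.Finite := Polynomial.finite_setOf_isRoot hq
  have hsub : {t : ℂ | (hk ν n).IsRoot t}ᶜ ⊆ {t : ℂ | P.IsRoot t} := by
    intro t ht
    have h0 : hk (fun k => μ k + t * w k) n ≠ 0 := by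
      rw [← h1 t n]; exact ht
    have := key_generic (fun k => μ k + t * w k) n h0 x
    simp only [Set.mem_setOf_eq, Polynomial.IsRoot, hPt t]
    rw [this]; ring
  have hinf : {t : ℂ | P.IsRoot t}.Infinite := (hfin.infinite_compl).mono hsub
  have hP0 : P = 0 := Polynomial.eq_zero_of_infinite_isRoot P hinf
  have := hPt 0
  rw [hP0] at this
  simp only [Polynomial.eval_zero] at this
  have hμ : (fun k => μ k + 0 * w k) = μ := by funext k; ring
  rw [hμ] at this
  linear_combination -this

lemma hasDerivAt_mu (k : ℕ) (ω : ℝ) :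
    HasDerivAt (fun ω : ℝ => mu ω k) (Complex.I * mu ω (k+1)) ω := by
  have hcont : ∀ (m : ℕ) (w : ℝ), Continuous fun t : ℝ =>
      (t:ℂ)^m * Complex.exp (Complex.I * w * t) := by
    intro m w
    exact (Complex.continuous_ofReal.pow m).mul
      (Complex.continuous_exp.comp (continuous_const.mul Complex.continuous_ofReal))
  have hcont' : Continuous fun t : ℝ =>
      Complex.I * (t:ℂ)^(k+1) * Complex.exp (Complex.I * ω * t) := by
    exact ((continuous_const.mul (Complex.continuous_ofReal.pow (k+1))).mul
      (Complex.continuous_exp.comp (continuous_const.mul Complex.continuous_ofReal)))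
  have key := intervalIntegral.hasDerivAt_integral_of_dominated_loc_of_deriv_le
    (μ := volume) (a := (-1:ℝ)) (b := (1:ℝ)) (x₀ := ω) (s := Metric.ball ω 1) (bound := fun _ => 1)
    (F := fun (w : ℝ) (t : ℝ) => (t:ℂ)^k * Complex.exp (Complex.I * w * t))
    (F' := fun (w : ℝ) (t : ℝ) => Complex.I * (t:ℂ)^(k+1) * Complex.exp (Complex.I * w * t))
    (Metric.ball_mem_nhds ω one_pos)
    (Filter.Eventually.of_forall fun w => ((hcont k w).aestronglyMeasurable))
    ((hcont k ω).intervalIntegrable _ _)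
    hcont'.aestronglyMeasurable
    ?_ (intervalIntegrable_const) ?_
  · have h2 := key.2
    have hval : (∫ t in (-1:ℝ)..1, Complex.I * (t:ℂ)^(k+1) * Complex.exp (Complex.I*ω*t))
        = Complex.I * mu ω (k+1) := by
      rw [mu, ← intervalIntegral.integral_const_mul]
      congr 1
      funext t
      ring
    rw [hval] at h2
    exact h2
  · refine Filter.Eventually.of_forall fun t ht w _ => ?_
    have ht' : |t| ≤ 1 := by
      rw [Set.uIoc_of_le (by norm_num : (-1:ℝ) ≤ 1)] at ht
      rw [abs_le]; exact ⟨le_of_lt ht.1, ht.2⟩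
    have hre : (Complex.I * (w:ℂ) * (t:ℂ)).re = 0 := by
      simp [Complex.mul_re, Complex.mul_im]
    rw [norm_mul, norm_mul, Complex.norm_I, one_mul, norm_pow, Complex.norm_real]
    rw [Complex.norm_exp, hre, Real.exp_zero, mul_one]
    exact pow_le_one₀ (abs_nonneg t) ht'
  · refine Filter.Eventually.of_forall fun t ht w _ => ?_
    have hl : HasDerivAt (fun z : ℂ => Complex.I * z * (t:ℂ)) (Complex.I * (t:ℂ)) (w:ℂ) := by
      simpa using ((hasDerivAt_id ((w:ℝ):ℂ)).const_mul Complex.I).mul_const (t:ℂ)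
    have h1 : HasDerivAt (fun z : ℂ => (t:ℂ)^k * Complex.exp (Complex.I * z * (t:ℂ)))
        ((t:ℂ)^k * (Complex.exp (Complex.I * (w:ℂ) * (t:ℂ)) * (Complex.I * (t:ℂ)))) (w:ℂ) :=
      (hl.cexp).const_mul _
    have h2 := h1.comp_ofReal
    refine h2.congr_deriv ?_
    ring

lemma det_deriv_eq (m : ℕ) (ω : ℝ) :
    HasDerivAt (hankel m) (∑ i : Fin (m+1),
      ((Amat (mu ω) m).updateCol i
        (fun j => Complex.I * mu ω ((j:ℕ) + (i:ℕ) + 1))).det) ω := by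
  have hfun : hankel m = fun ω' => ∑ σ : Equiv.Perm (Fin (m+1)),
      ((Equiv.Perm.sign σ : ℤ) : ℂ) * ∏ i, mu ω' (((σ i) : ℕ) + (i : ℕ)) := by
    funext ω'
    rw [hankel, Matrix.det_apply]
    refine Finset.sum_congr rfl fun σ _ => ?_
    rw [Units.smul_def, zsmul_eq_mul]
    rfl
  rw [hfun]
  have hder : HasDerivAt (fun ω' => ∑ σ : Equiv.Perm (Fin (m+1)),
      ((Equiv.Perm.sign σ : ℤ) : ℂ) * ∏ i, mu ω' (((σ i) : ℕ) + (i : ℕ)))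
      (∑ σ : Equiv.Perm (Fin (m+1)), ((Equiv.Perm.sign σ : ℤ) : ℂ) *
        ∑ i : Fin (m+1), (∏ j ∈ Finset.univ.erase i, mu ω (((σ j) : ℕ) + (j : ℕ))) •
          (Complex.I * mu ω (((σ i) : ℕ) + (i : ℕ) + 1))) ω := by
    apply HasDerivAt.fun_sum
    intro σ _
    exact (HasDerivAt.fun_finsetProd
      (fun i _ => hasDerivAt_mu (((σ i) : ℕ) + (i : ℕ)) ω)).const_mul _
  convert hder using 1
  calc ∑ i : Fin (m+1), ((Amat (mu ω) m).updateCol i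
        (fun j => Complex.I * mu ω ((j:ℕ) + (i:ℕ) + 1))).det
      = ∑ i : Fin (m+1), ∑ σ : Equiv.Perm (Fin (m+1)),
          ((Equiv.Perm.sign σ : ℤ) : ℂ) *
            ((∏ j ∈ Finset.univ.erase i, mu ω (((σ j) : ℕ) + (j : ℕ))) •
              (Complex.I * mu ω (((σ i) : ℕ) + (i : ℕ) + 1))) := by
        refine Finset.sum_congr rfl fun i _ => ?_
        rw [Matrix.det_apply]
        refine Finset.sum_congr rfl fun σ _ => ?_
        rw [Units.smul_def, zsmul_eq_mul]
        congr 1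
        rw [← Finset.mul_prod_erase Finset.univ _ (Finset.mem_univ i)]
        rw [Matrix.updateCol_self, smul_eq_mul]
        rw [Finset.prod_congr rfl (fun j hj => Matrix.updateCol_ne
          (Finset.ne_of_mem_erase hj))]
        rw [mul_comm]
        rfl
    _ = ∑ σ : Equiv.Perm (Fin (m+1)), ((Equiv.Perm.sign σ : ℤ) : ℂ) *
          ∑ i : Fin (m+1), (∏ j ∈ Finset.univ.erase i, mu ω (((σ j) : ℕ) + (j : ℕ))) •
            (Complex.I * mu ω (((σ i) : ℕ) + (i : ℕ) + 1)) := by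
        rw [Finset.sum_comm]
        exact Finset.sum_congr rfl fun σ _ => (Finset.mul_sum _ _ _).symm

lemma sum_det_eq (m : ℕ) (ω : ℝ) :
    (∑ i : Fin (m+1), ((Amat (mu ω) m).updateCol i
        (fun j => Complex.I * mu ω ((j:ℕ) + (i:ℕ) + 1))).det)
      = Complex.I * gk (mu ω) m := by
  rw [Finset.sum_eq_single (Fin.last m)]
  · have hv : (fun j : Fin (m+1) => Complex.I * mu ω ((j:ℕ) + ((Fin.last m : Fin (m+1)):ℕ) + 1))
        = (Complex.I • fun j : Fin (m+1) => mu ω ((j:ℕ) + m + 1)) := by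
      funext j; simp [Fin.val_last, smul_eq_mul]
    rw [hv, Matrix.det_updateCol_smul]
    rfl
  · intro i _ hi
    have him : (i:ℕ) < m := by
      have := Nat.lt_succ_iff.mp i.isLt
      rcases Nat.lt_or_ge (i:ℕ) m with h | h
      · exact h
      · exact absurd (Fin.ext (by simp [Fin.val_last]; omega)) hi
    have hv : (fun j : Fin (m+1) => Complex.I * mu ω ((j:ℕ) + (i:ℕ) + 1))
        = (Complex.I • fun j : Fin (m+1) => mu ω ((j:ℕ) + ((i:ℕ) + 1))) := by
      funext j
      simp only [Pi.smul_apply, smul_eq_mul]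
      rfl
    rw [hv, Matrix.det_updateCol_smul]
    have hz : ((Amat (mu ω) m).updateCol i
        (fun j : Fin (m+1) => mu ω ((j:ℕ) + ((i:ℕ) + 1)))).det = 0 := by
      refine Matrix.det_zero_of_column_eq (i := i) (j := ⟨(i:ℕ)+1, by omega⟩) ?_ ?_
      · simp [Fin.ext_iff]
      · intro k
        rw [Matrix.updateCol_apply, Matrix.updateCol_apply,
          if_pos rfl, if_neg (by simp only [Fin.ext_iff]; omega)]
        rfl
    rw [hz, mul_zero]
  · simp


lemma hasDerivAt_hankel (m : ℕ) (ω : ℝ) :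
    HasDerivAt (hankel m) (Complex.I * gk (mu ω) m) ω := by
  have h := det_deriv_eq m ω
  rwa [sum_det_eq m ω] at h

lemma ptil_eq (n : ℕ) (ω : ℝ) (x : ℂ) : ptil n ω x = pt (mu ω) n x := by
  rw [ptil, pt, Fm]
  congr 1
  ext j k
  rw [Matrix.of_apply, Matrix.updateCol_apply]
  by_cases hkn : (k : ℕ) = n
  · rw [if_pos hkn, if_pos (Fin.ext (by simp [Fin.val_last, hkn]))]
  · rw [if_neg hkn, if_neg (fun h => hkn (by rw [h]; simp [Fin.val_last]))]
    rfl

/-- Hankel-determinant form of the three-term recurrence (with `n ≥ 1` replaced by the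
shift `n ↦ n + 1`, so the indices `n-1, n, n+1` become `n, n+1, n+2`). -/
theorem stmt8 (n : ℕ) (ω : ℝ) (x : ℂ) :
    ptil (n + 2) ω x * (hankel n ω) ^ 2 =
      (hankel (n + 1) ω * hankel n ω * x +
          Complex.I * (deriv (hankel (n + 1)) ω * hankel n ω -
            deriv (hankel n) ω * hankel (n + 1) ω)) * ptil (n + 1) ω x -
        (hankel (n + 1) ω) ^ 2 * ptil n ω x := by
  have hd0 : deriv (hankel n) ω = Complex.I * gk (mu ω) n := (hasDerivAt_hankel n ω).deriv
  have hd1 : deriv (hankel (n+1)) ω = Complex.I * gk (mu ω) (n+1) :=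
    (hasDerivAt_hankel (n+1) ω).deriv
  have hb : ∀ m, hankel m ω = hk (mu ω) m := fun m => rfl
  rw [hd0, hd1, ptil_eq, ptil_eq, ptil_eq, hb, hb]
  have hkey := key_all n (mu ω) x
  linear_combination hkey - (gk (mu ω) (n+1) * hk (mu ω) n - gk (mu ω) n * hk (mu ω) (n+1)) *
    pt (mu ω) (n+1) x * Complex.I_mul_I
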